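/- arXiv:2406.02948 — 4 statements merged into one kernel-verified Lean document; each statement's English description precedes it below -/
import Mathlib

section
/- Let p be a natural number, λ₁, λ₂ > 0 be real numbers, and for λ > 0 define f_λ : ℝ → ℝ by f_λ(x) = e^x / (1 + λ e^x)^(1 + 1/λ). Let H₁, H₂ : ℝ → ℝ be functions with H₁(t) → −∞ and H₂(t) → −∞ as t → −∞, let β₁, β₂ ∈ ℝ^p, and let C be a real constant with 0 < C < ∞. If lim_{t→−∞} H₁(t)/H₂(t) = 1/C and, for every x ∈ ℝ^p, lim_{t→−∞} f_{λ₁}(H₁(t) − x·β₁) / f_{λ₂}(H₂(t) − x·β₂) = C, then C = 1. -/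
open Real Filter Topology

/-- The density `f_λ(x) = e^x / (1 + λ e^x)^(1 + 1/λ)`. -/
noncomputable def densF (lam x : ℝ) : ℝ :=
  Real.exp x / (1 + lam * Real.exp x) ^ (1 + 1 / lam)

lemma denom_tendsto (lam : ℝ) (H : ℝ → ℝ) (hH : Tendsto H atBot atBot) :
    Tendsto (fun t => (1 + lam * Real.exp (H t)) ^ (1 + 1 / lam)) atBot (nhds 1) := by
  have h1 : Tendsto (fun t => 1 + lam * Real.exp (H t)) atBot (nhds 1) := by
    have := (Real.tendsto_exp_atBot.comp hH).const_mul lam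
    have h := (tendsto_const_nhds (x := (1:ℝ))).add (by simpa using this : Tendsto (fun t => lam * Real.exp (H t)) atBot (nhds 0))
    simpa using h
  have h2 : Tendsto (fun y : ℝ => y ^ (1 + 1 / lam)) (nhds 1) (nhds 1) := by
    have := (Real.continuousAt_rpow_const 1 (1 + 1 / lam) (Or.inl one_ne_zero))
    simpa [Real.one_rpow] using this.tendsto
  exact h2.comp h1

lemma denom_pos (lam : ℝ) (hlam : 0 < lam) (y : ℝ) :
    0 < (1 + lam * Real.exp y) ^ (1 + 1 / lam) := by
  apply Real.rpow_pos_of_pos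
  positivity

/-- Proposition 1, case `a = -∞`. -/
theorem prop1_neg_infty (p : ℕ) (lam₁ lam₂ : ℝ) (hlam₁ : 0 < lam₁) (hlam₂ : 0 < lam₂)
    (H₁ H₂ : ℝ → ℝ) (hH₁ : Tendsto H₁ atBot atBot) (hH₂ : Tendsto H₂ atBot atBot)
    (β₁ β₂ : Fin p → ℝ) (C : ℝ) (hC : 0 < C)
    (hratio : Tendsto (fun t => H₁ t / H₂ t) atBot (nhds (1 / C)))
    (hf : ∀ x : Fin p → ℝ,
      Tendsto
        (fun t =>
          densF lam₁ (H₁ t - ∑ i, x i * β₁ i) / densF lam₂ (H₂ t - ∑ i, x i * β₂ i))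
        atBot (nhds C)) :
    C = 1 := by
  have h0 := hf 0
  simp only [Pi.zero_apply, zero_mul, Finset.sum_const_zero, sub_zero] at h0
  -- densF ratio = exp(H₁-H₂) * D₂/D₁
  set D₁ := fun t => (1 + lam₁ * Real.exp (H₁ t)) ^ (1 + 1 / lam₁) with hD₁
  set D₂ := fun t => (1 + lam₂ * Real.exp (H₂ t)) ^ (1 + 1 / lam₂) with hD₂
  have hB : Tendsto (fun t => D₁ t / D₂ t) atBot (nhds 1) := by
    have := (denom_tendsto lam₁ H₁ hH₁).div (denom_tendsto lam₂ H₂ hH₂) one_ne_zero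
    rw [div_one] at this
    exact this
  -- exp(H₁ - H₂) = ratio * (D₁/D₂)
  have hexp : Tendsto (fun t => Real.exp (H₁ t - H₂ t)) atBot (nhds C) := by
    have := h0.mul hB
    rw [mul_one] at this
    refine this.congr (fun t => ?_)
    have e1 : Real.exp (H₁ t) > 0 := Real.exp_pos _
    have e2 : Real.exp (H₂ t) > 0 := Real.exp_pos _
    have d1 : 0 < D₁ t := denom_pos _ hlam₁ _
    have d2 : 0 < D₂ t := denom_pos _ hlam₂ _
    rw [Real.exp_sub]
    simp only [densF, hD₁, hD₂]
    field_simp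
  have hlog : Tendsto (fun t => H₁ t - H₂ t) atBot (nhds (Real.log C)) := by
    have hcont : Tendsto Real.log (nhds C) (nhds (Real.log C)) :=
      (Real.continuousAt_log hC.ne').tendsto
    have := hcont.comp hexp
    refine this.congr (fun t => ?_)
    simp [Function.comp, Real.log_exp]
  have hinv : Tendsto (fun t => (H₂ t)⁻¹) atBot (nhds 0) := by
    have hn : Tendsto (fun t => -H₂ t) atBot atTop := tendsto_neg_atBot_atTop.comp hH₂
    have h2 := hn.inv_tendsto_atTop
    have h3 := h2.neg
    rw [neg_zero] at h3
    exact h3.congr (fun t => by simp [inv_neg])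
  have hmul : Tendsto (fun t => (H₁ t - H₂ t) * (H₂ t)⁻¹) atBot (nhds 0) := by
    have := hlog.mul hinv
    simpa using this
  have hne : ∀ᶠ t in atBot, H₂ t ≠ 0 := by
    filter_upwards [hH₂.eventually (eventually_lt_atBot (0:ℝ))] with t ht
    exact ht.ne
  have hratio1 : Tendsto (fun t => H₁ t / H₂ t) atBot (nhds 1) := by
    have : Tendsto (fun t => (H₁ t - H₂ t) * (H₂ t)⁻¹ + 1) atBot (nhds 1) := by
      simpa using hmul.add tendsto_const_nhds
    refine Tendsto.congr' ?_ this
    filter_upwards [hne] with t ht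
    field_simp
    ring
  have huniq : (1 : ℝ) / C = 1 := tendsto_nhds_unique hratio hratio1
  field_simp at huniq
  linarith
end

section
/- For every λ > 0, λ^(1 + 1/λ) · e^(x/λ) · f_λ(x) tends to 1 as x → +∞, where f_λ(x) = e^x / (1 + λ e^x)^(1 + 1/λ); that is, f_λ(x) is asymptotically equivalent to λ^(−(1 + 1/λ)) e^(−x/λ) as x → +∞. -/
open Real Filter Topology

/-- tail equivalence of `f_λ` at `+∞`:
`λ^(1 + 1/λ) · e^(x/λ) · f_λ(x) → 1` as `x → +∞`. -/
theorem densF_tail_at_top (lam : ℝ) (hlam : 0 < lam) :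
    Tendsto (fun x => lam ^ (1 + 1 / lam) * Real.exp (x / lam) * densF lam x)
      atTop (nhds 1) := by
  set p : ℝ := 1 + 1 / lam with hp
  have hbase : Tendsto (fun x => lam * Real.exp x / (1 + lam * Real.exp x)) atTop (nhds 1) := by
    have h1 : Tendsto (fun x => 1 + lam * Real.exp x) atTop atTop :=
      tendsto_atTop_add_const_left _ 1
        ((Real.tendsto_exp_atTop).const_mul_atTop hlam)
    have h2 : Tendsto (fun x => 1 - (1 + lam * Real.exp x)⁻¹) atTop (nhds 1) := by
      have := h1.inv_tendsto_atTop
      simpa using (tendsto_const_nhds (x := (1:ℝ)) (f := atTop)).sub this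
    refine h2.congr' ?_
    filter_upwards [eventually_ge_atTop 0] with x _
    have hpos : (0:ℝ) < 1 + lam * Real.exp x := by positivity
    field_simp
    ring
  have hrpow : Tendsto (fun y : ℝ => y ^ p) (nhds 1) (nhds 1) := by
    have : ContinuousAt (fun y : ℝ => y ^ p) 1 :=
      Real.continuousAt_rpow_const 1 p (Or.inl one_ne_zero)
    simpa using this.tendsto
  have := hrpow.comp hbase
  refine this.congr ?_
  intro x
  have hexp : (0:ℝ) < Real.exp x := Real.exp_pos x
  have hpos : (0:ℝ) < 1 + lam * Real.exp x := by positivity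
  have hnum : (0:ℝ) < lam * Real.exp x := by positivity
  simp only [Function.comp, densF]
  rw [Real.div_rpow hnum.le hpos.le, Real.mul_rpow hlam.le hexp.le]
  have hexp_rpow : Real.exp x ^ p = Real.exp (x / lam) * Real.exp x := by
    rw [← Real.exp_add, ← Real.exp_mul]
    congr 1
    field_simp [hp]
    rw [hp, mul_assoc, add_mul, one_div, inv_mul_cancel₀ hlam.ne']
    ring
  rw [hexp_rpow]
  ring
end

section
/- Let f : ℝ → (0, ∞) be differentiable, let g = f'/f be the derivative of log f, and suppose g(z) → g∞ as z → −∞ for some real g∞ with 0 < g∞ < ∞. Let A, B : ℝ → ℝ be functions with A(z) → −∞ and B(z) → −∞ as z → −∞, such that f(A(z)) / f(B(z)) → 1 as z → −∞. Then A(z) − B(z) → 0 as z → −∞. -/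
open Real Filter Topology

/-- mean-value-theorem core of Lemma D.1. -/
theorem diff_tendsto_zero_of_ratio_tendsto_one (f : ℝ → ℝ)
    (hfpos : ∀ z, 0 < f z) (hfdiff : Differentiable ℝ f)
    (ginf : ℝ) (hginf : 0 < ginf)
    (hg : Tendsto (fun z => deriv f z / f z) atBot (nhds ginf))
    (A B : ℝ → ℝ) (hA : Tendsto A atBot atBot) (hB : Tendsto B atBot atBot)
    (hratio : Tendsto (fun z => f (A z) / f (B z)) atBot (nhds 1)) :
    Tendsto (fun z => A z - B z) atBot (nhds 0) := by
  set C : ℝ := ginf / 2 with hC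
  have hCpos : 0 < C := by positivity
  -- eventually g ≥ C
  have hev : ∀ᶠ x in atBot, C ≤ deriv f x / f x :=
    hg.eventually (eventually_ge_nhds (by nlinarith))
  obtain ⟨M, hM⟩ := eventually_atBot.mp hev
  -- log ∘ f facts
  have hL : ∀ x, HasDerivAt (fun t => Real.log (f t)) (deriv f x / f x) x := fun x =>
    ((hfdiff x).hasDerivAt).log (hfpos x).ne'
  have hLdiff : Differentiable ℝ (fun t => Real.log (f t)) := fun x => (hL x).differentiableAt
  -- key MVT bound
  have key : ∀ x ≤ M, ∀ y ≤ M, x ≤ y →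
      C * (y - x) ≤ Real.log (f y) - Real.log (f x) := by
    intro x hx y hy hxy
    refine Convex.mul_sub_le_image_sub_of_le_deriv (convex_Iic M)
      hLdiff.continuous.continuousOn hLdiff.differentiableOn ?_ x hx y hy hxy
    intro t ht
    rw [interior_Iic] at ht
    rw [(hL t).deriv]
    exact hM t (le_of_lt ht)
  have habs : ∀ᶠ z in atBot,
      |A z - B z| ≤ C⁻¹ * |Real.log (f (A z) / f (B z))| := by
    filter_upwards [hA.eventually (eventually_le_atBot M),
      hB.eventually (eventually_le_atBot M)] with z hAz hBz
    have hlog : Real.log (f (A z) / f (B z)) =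
        Real.log (f (A z)) - Real.log (f (B z)) :=
      Real.log_div (hfpos _).ne' (hfpos _).ne'
    rw [hlog]
    rcases le_total (A z) (B z) with h | h
    · have h1 := key (A z) hAz (B z) hBz h
      have hnn : 0 ≤ C * (B z - A z) := mul_nonneg hCpos.le (by linarith)
      have h2 : |A z - B z| = B z - A z := by
        rw [abs_of_nonpos (by linarith)]; ring
      have h3 : |Real.log (f (A z)) - Real.log (f (B z))| =
          Real.log (f (B z)) - Real.log (f (A z)) := by
        rw [abs_of_nonpos (by linarith)]; ring
      rw [h2, h3, le_inv_mul_iff₀ hCpos]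
      linarith [h1]
    · have h1 := key (B z) hBz (A z) hAz h
      have hnn : 0 ≤ C * (A z - B z) := mul_nonneg hCpos.le (by linarith)
      rw [abs_of_nonneg (by linarith : (0:ℝ) ≤ A z - B z),
        abs_of_nonneg (by linarith), le_inv_mul_iff₀ hCpos]
      linarith [h1]
  have hlog0 : Tendsto (fun z => C⁻¹ * |Real.log (f (A z) / f (B z))|) atBot (nhds 0) := by
    have h1 : Tendsto (fun z => Real.log (f (A z) / f (B z))) atBot (nhds 0) := by
      have := (Real.continuousAt_log (by norm_num : (1:ℝ) ≠ 0)).tendsto.comp hratio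
      simpa [Function.comp_def] using this
    have h2 : Tendsto (fun z => C⁻¹ * |Real.log (f (A z) / f (B z))|) atBot
        (nhds (C⁻¹ * |(0:ℝ)|)) := (tendsto_const_nhds.mul h1.abs)
    simpa using h2
  refine squeeze_zero_norm' ?_ hlog0
  simpa [Real.norm_eq_abs] using habs
end

section
/- Let p be a natural number and let f₁, f₂ : ℝ → (0, ∞) be differentiable functions such that g₁ = f₁'/f₁ satisfies g₁(z) → g∞ as z → −∞ for some real g∞ with 0 < g∞ < ∞, and such that f₁(t)/f₂(t) → 1 as t → −∞. Let H₁, H₂ : ℝ → ℝ be functions with H₁(z) → −∞ and H₂(z) → −∞ as z → −∞, and let β₁, β₂ ∈ ℝ^p. If for every x ∈ ℝ^p, f₁(H₁(z) − x·β₁) / f₂(H₂(z) − x·β₂) → 1 as z → −∞, then β₁ = β₂ and H₁(z) − H₂(z) → 0 as z → −∞. -/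
open Real Filter Topology

/-- MVT-based two-sided bound. -/
lemma lemmaD1_mvt_bound (f g : ℝ → ℝ) (hf : ∀ t, HasDerivAt f (g t) t)
    (M ε ginf : ℝ) (hg : ∀ t ≤ M, |g t - ginf| ≤ ε) :
    ∀ u v, u ≤ M → v ≤ M → |f u - f v - ginf * (u - v)| ≤ ε * |u - v| := by
  have key : ∀ u v, u ≤ v → v ≤ M → |f v - f u - ginf * (v - u)| ≤ ε * |v - u| := by
    intro u v huv hvM
    rcases eq_or_lt_of_le huv with rfl | hlt
    · simp
    · obtain ⟨c, hc, hceq⟩ := exists_hasDerivAt_eq_slope f g hlt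
        (fun t _ => (hf t).continuousAt.continuousWithinAt) (fun t _ => hf t)
      have hcM : c ≤ M := le_trans (le_of_lt hc.2) hvM
      have hne : v - u ≠ 0 := sub_ne_zero.2 hlt.ne'
      rw [eq_div_iff hne] at hceq
      have h1 : f v - f u = g c * (v - u) := hceq.symm
      have : f v - f u - ginf * (v - u) = (g c - ginf) * (v - u) := by rw [h1]; ring
      rw [this, abs_mul]
      exact mul_le_mul_of_nonneg_right (hg c hcM) (abs_nonneg _)
  intro u v huM hvM
  rcases le_total u v with h | h
  · have := key u v h hvM
    calc |f u - f v - ginf * (u - v)| = |f v - f u - ginf * (v - u)| := by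
          rw [← abs_neg]; ring_nf
      _ ≤ ε * |v - u| := this
      _ = ε * |u - v| := by rw [abs_sub_comm]
  · exact (abs_sub_comm u v ▸ key v u h huM)

/-- Lemma D.1 (case `c = 1`). -/
theorem lemmaD1 (p : ℕ) (f₁ f₂ : ℝ → ℝ)
    (hf₁pos : ∀ z, 0 < f₁ z) (hf₂pos : ∀ z, 0 < f₂ z)
    (hf₁diff : Differentiable ℝ f₁) (hf₂diff : Differentiable ℝ f₂)
    (ginf : ℝ) (hginf : 0 < ginf)
    (hg₁ : Tendsto (fun z => deriv f₁ z / f₁ z) atBot (nhds ginf))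
    (hf₁f₂ : Tendsto (fun t => f₁ t / f₂ t) atBot (nhds 1))
    (H₁ H₂ : ℝ → ℝ) (hH₁ : Tendsto H₁ atBot atBot) (hH₂ : Tendsto H₂ atBot atBot)
    (β₁ β₂ : Fin p → ℝ)
    (hratio : ∀ x : Fin p → ℝ,
      Tendsto (fun z => f₁ (H₁ z - ∑ i, x i * β₁ i) / f₂ (H₂ z - ∑ i, x i * β₂ i))
        atBot (nhds 1)) :
    β₁ = β₂ ∧ Tendsto (fun z => H₁ z - H₂ z) atBot (nhds 0) := by
  set L : ℝ → ℝ := fun t => Real.log (f₁ t) with hLdef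
  set g : ℝ → ℝ := fun t => deriv f₁ t / f₁ t with hgdef
  have hL : ∀ t, HasDerivAt L (g t) t :=
    fun t => ((hf₁diff t).hasDerivAt.log (hf₁pos t).ne')
  -- exp of L difference is the ratio
  have hexpL : ∀ u v, Real.exp (L u - L v) = f₁ u / f₁ v := by
    intro u v
    rw [Real.exp_sub, hLdef]
    simp only [Real.exp_log (hf₁pos _)]
  -- (i): for fixed a, L (t - a) - L t → -(ginf * a)
  have hshift : ∀ a : ℝ, Tendsto (fun t => L (t - a) - L t) atBot (nhds (-(ginf * a))) := by
    intro a
    rw [Metric.tendsto_nhds]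
    intro ε hε
    have hε' : 0 < ε / (|a| + 1) := by positivity
    obtain ⟨M, hM⟩ := eventually_atBot.1 (hg₁.eventually
      (Metric.closedBall_mem_nhds ginf hε'))
    filter_upwards [eventually_le_atBot (min M (M + a))] with t ht
    have htM : t ≤ M := le_trans ht (min_le_left _ _)
    have htaM : t - a ≤ M := by
      have := le_trans ht (min_le_right _ _); linarith
    have hb := lemmaD1_mvt_bound L g hL M (ε / (|a| + 1)) ginf
      (fun s hs => by simpa [Real.dist_eq] using hM s hs) (t - a) t htaM htM
    have heq : (t - a) - t = -a := by ring
    rw [heq] at hb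
    rw [Real.dist_eq]
    have : |L (t - a) - L t - -(ginf * a)| ≤ ε / (|a| + 1) * |a| := by
      have : ginf * (-a) = -(ginf * a) := by ring
      rw [this, abs_neg] at hb
      exact hb
    calc |L (t - a) - L t - -(ginf * a)| ≤ ε / (|a| + 1) * |a| := this
      _ < ε := by
          rw [div_mul_eq_mul_div, div_lt_iff₀ (by positivity)]
          nlinarith [abs_nonneg a]
  have hne₁ : ∀ t, f₁ t ≠ 0 := fun t => (hf₁pos t).ne'
  have hne₂ : ∀ t, f₂ t ≠ 0 := fun t => (hf₂pos t).ne'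
  -- f₁ (t - a) / f₁ t → exp (-(ginf * a))
  have hratio₁ : ∀ a : ℝ,
      Tendsto (fun t => f₁ (t - a) / f₁ t) atBot (nhds (Real.exp (-(ginf * a)))) := by
    intro a
    have h := (Real.continuous_exp.tendsto _).comp (hshift a)
    simpa only [Function.comp_def, hexpL] using h
  have h0 : Tendsto (fun z => f₁ (H₁ z) / f₂ (H₂ z)) atBot (nhds 1) := by
    simpa using hratio 0
  have hf₂f₁ : Tendsto (fun t => f₂ t / f₁ t) atBot (nhds 1) := by
    have := hf₁f₂.inv₀ one_ne_zero
    simpa [inv_div] using this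
  -- Step 1: equality of the linear forms
  have hab : ∀ x : Fin p → ℝ, (∑ i, x i * β₁ i) = ∑ i, x i * β₂ i := by
    intro x
    set a := ∑ i, x i * β₁ i with ha
    set b := ∑ i, x i * β₂ i with hb
    have hF1 : Tendsto (fun z => f₁ (H₁ z - a) / f₁ (H₁ z)) atBot
        (nhds (Real.exp (-(ginf * a)))) := (hratio₁ a).comp hH₁
    have hF3 : Tendsto (fun z => f₂ (H₂ z) / f₁ (H₂ z)) atBot (nhds 1) := hf₂f₁.comp hH₂
    have hF4 : Tendsto (fun z => f₁ (H₂ z) / f₁ (H₂ z - b)) atBot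
        (nhds (Real.exp (-(ginf * b)))⁻¹) := by
      have := ((hratio₁ b).comp hH₂).inv₀ (Real.exp_ne_zero _)
      simpa [inv_div] using this
    have hH₂b : Tendsto (fun z => H₂ z - b) atBot atBot := by
      simpa [sub_eq_add_neg] using tendsto_atBot_add_const_right atBot (-b) hH₂
    have hF5 : Tendsto (fun z => f₁ (H₂ z - b) / f₂ (H₂ z - b)) atBot (nhds 1) :=
      hf₁f₂.comp hH₂b
    have hprod : Tendsto (fun z => f₁ (H₁ z - a) / f₂ (H₂ z - b)) atBot
        (nhds (Real.exp (-(ginf * a)) * 1 * 1 * (Real.exp (-(ginf * b)))⁻¹ * 1)) :=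
      ((((hF1.mul h0).mul hF3).mul hF4).mul hF5).congr fun z => by
        rw [div_mul_div_cancel₀ (hne₁ _), div_mul_div_cancel₀ (hne₂ _),
          div_mul_div_cancel₀ (hne₁ _), div_mul_div_cancel₀ (hne₁ _)]
    have huniq : Real.exp (-(ginf * a)) * 1 * 1 * (Real.exp (-(ginf * b)))⁻¹ * 1 = 1 :=
      tendsto_nhds_unique hprod (hratio x)
    have hexp : Real.exp (-(ginf * a) - -(ginf * b)) = 1 := by
      rw [Real.exp_sub]
      simpa [div_eq_mul_inv] using huniq
    have h0' : -(ginf * a) - -(ginf * b) = 0 := by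
      rwa [Real.exp_eq_one_iff] at hexp
    have : ginf * a = ginf * b := by linarith
    exact mul_left_cancel₀ hginf.ne' this
  have hβ : β₁ = β₂ := by
    funext i
    have := hab (Pi.single i 1)
    simpa [Pi.single_apply, ite_mul] using this
  refine ⟨hβ, ?_⟩
  -- Step 2
  have hA : Tendsto (fun z => f₁ (H₂ z) / f₂ (H₂ z)) atBot (nhds 1) := hf₁f₂.comp hH₂
  have hq : Tendsto (fun z => f₁ (H₁ z) / f₁ (H₂ z)) atBot (nhds 1) := by
    have h := (h0.div hA one_ne_zero).congr
      (fun z => div_div_div_cancel_right₀ (hne₂ (H₂ z)) (f₁ (H₁ z)) (f₁ (H₂ z)))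
    simpa using h
  have hlog : Tendsto (fun z => L (H₁ z) - L (H₂ z)) atBot (nhds 0) := by
    have h := hq.log one_ne_zero
    have heq : (fun z => Real.log (f₁ (H₁ z) / f₁ (H₂ z)))
        = fun z => L (H₁ z) - L (H₂ z) := by
      funext z; rw [Real.log_div (hne₁ _) (hne₁ _)]
    rw [heq] at h
    simpa using h
  obtain ⟨M, hM⟩ := eventually_atBot.1 (hg₁.eventually
    (Metric.closedBall_mem_nhds ginf (half_pos hginf)))
  have hbnd := lemmaD1_mvt_bound L g hL M (ginf / 2) ginf
    (fun s hs => by simpa [Real.dist_eq] using hM s hs)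
  have habs : Tendsto (fun z => |H₁ z - H₂ z|) atBot (nhds 0) := by
    refine squeeze_zero' (Eventually.of_forall fun z => abs_nonneg _)
      (g := fun z => (2 / ginf) * |L (H₁ z) - L (H₂ z)|) ?_ ?_
    · filter_upwards [hH₁.eventually (eventually_le_atBot M),
        hH₂.eventually (eventually_le_atBot M)] with z h1 h2
      have hb := hbnd (H₁ z) (H₂ z) h1 h2
      have htri : ginf * |H₁ z - H₂ z| ≤
          |L (H₁ z) - L (H₂ z)| + ginf / 2 * |H₁ z - H₂ z| := by
        have h1' : |ginf * (H₁ z - H₂ z)| ≤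
            |L (H₁ z) - L (H₂ z)| + |L (H₁ z) - L (H₂ z) - ginf * (H₁ z - H₂ z)| := by
          calc |ginf * (H₁ z - H₂ z)|
              = |(L (H₁ z) - L (H₂ z)) - (L (H₁ z) - L (H₂ z) - ginf * (H₁ z - H₂ z))| := by
                ring_nf
            _ ≤ _ := abs_sub _ _
        rw [abs_mul, abs_of_pos hginf] at h1'
        linarith
      rw [div_mul_eq_mul_div, le_div_iff₀ hginf]
      nlinarith [abs_nonneg (H₁ z - H₂ z)]
    · have h := (hlog.abs).const_mul (2 / ginf)
      simpa using h
  exact tendsto_zero_iff_abs_tendsto_zero _ |>.mpr habs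
end
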